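/- Let U be the set produced by running the Gonzalez greedy algorithm for k steps on a finite metric space (V,d). Then every point v ∈ V satisfies min_{u ∈ U} d(v,u) ≤ div(U); i.e., U is simultaneously a div(U)-cover of V and has minimum pairwise distance div(U). -/
import Mathlib


open scoped Classical

noncomputable def fdiv {V : Type*} [MetricSpace V] (S : Finset V) : ℝ :=
  sInf {r : ℝ | ∃ u ∈ S, ∃ v ∈ S, u ≠ v ∧ r = dist u v}

theorem stmt12 {V : Type*} [MetricSpace V] [Fintype V] (k : ℕ) (hk : 2 ≤ k) (u : ℕ → V)
    (hgreedy : ∀ i (hi : 0 < i) (_ : i < k) (v : V),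
      (Finset.range i).inf' (Finset.nonempty_range_iff.mpr (by omega)) (fun j => dist (u j) v) ≤
      (Finset.range i).inf' (Finset.nonempty_range_iff.mpr (by omega)) (fun j => dist (u j) (u i))) :
    ∀ v : V, ∃ w ∈ (Finset.range k).image u,
      dist v w ≤ fdiv ((Finset.range k).image u) := by
  intro v
  set U := (Finset.range k).image u with hU
  set S : Set ℝ := {r : ℝ | ∃ a ∈ U, ∃ b ∈ U, a ≠ b ∧ r = dist a b} with hSdef
  have hmemU : ∀ j, j < k → u j ∈ U := fun j hj =>
    Finset.mem_image.mpr ⟨j, Finset.mem_range.mpr hj, rfl⟩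
  by_cases hS : ∃ p q, p < k ∧ q < k ∧ p < q ∧ u p ≠ u q
  · -- nondegenerate case
    set T : Finset (ℕ × ℕ) :=
      (Finset.range k ×ˢ Finset.range k).filter
        (fun pq => u pq.1 ≠ u pq.2 ∧ pq.1 < pq.2) with hT
    have hTmem : ∀ p q, (p, q) ∈ T ↔ p < k ∧ q < k ∧ u p ≠ u q ∧ p < q := by
      intro p q
      simp [hT, Finset.mem_filter, Finset.mem_product, Finset.mem_range, and_assoc]
    obtain ⟨p, q, hpk, hqk, hpq, hne⟩ := hS
    have hTne : T.Nonempty := ⟨(p, q), (hTmem p q).mpr ⟨hpk, hqk, hne, hpq⟩⟩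
    set m : ℝ := T.inf' hTne (fun pq => dist (u pq.1) (u pq.2)) with hm
    obtain ⟨⟨a, b⟩, habT, habm⟩ := Finset.exists_mem_eq_inf' hTne
      (fun pq => dist (u pq.1) (u pq.2))
    obtain ⟨hak, hbk, habne, hab⟩ := (hTmem a b).mp habT
    -- m is a lower bound of S
    have hlb : ∀ r ∈ S, m ≤ r := by
      rintro r ⟨x, hx, y, hy, hxy, rfl⟩
      obtain ⟨px, hpx, rfl⟩ := Finset.mem_image.mp hx
      obtain ⟨py, hpy, rfl⟩ := Finset.mem_image.mp hy
      rw [Finset.mem_range] at hpx hpy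
      have hpxy : px ≠ py := fun h => hxy (by rw [h])
      rcases lt_or_gt_of_ne hpxy with h | h
      · exact Finset.inf'_le _ ((hTmem px py).mpr ⟨hpx, hpy, hxy, h⟩)
      · calc m ≤ dist (u py) (u px) :=
              Finset.inf'_le _ ((hTmem py px).mpr ⟨hpy, hpx, fun e => hxy e.symm, h⟩)
          _ = dist (u px) (u py) := dist_comm _ _
    have hmS : m ∈ S := ⟨u a, hmemU a hak, u b, hmemU b hbk, habne, habm⟩
    have hfdiv : fdiv U = m := by
      unfold fdiv
      refine le_antisymm (csInf_le ⟨m, hlb⟩ hmS) (le_csInf ⟨m, hmS⟩ hlb)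
    -- greedy step at i = b (0 < b since a < b)
    have hb0 : 0 < b := Nat.lt_of_le_of_lt (Nat.zero_le a) hab
    have h1 := hgreedy b hb0 hbk v
    obtain ⟨j0, hj0, hj0eq⟩ := Finset.exists_mem_eq_inf'
      (Finset.nonempty_range_iff.mpr (by omega : b ≠ 0)) (fun j => dist (u j) v)
    rw [Finset.mem_range] at hj0
    refine ⟨u j0, hmemU j0 (hj0.trans hbk), ?_⟩
    rw [dist_comm, hfdiv]
    calc dist (u j0) v
        = (Finset.range b).inf' _ (fun j => dist (u j) v) := hj0eq.symm
      _ ≤ (Finset.range b).inf' _ (fun j => dist (u j) (u b)) := h1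
      _ ≤ dist (u a) (u b) := Finset.inf'_le _ (Finset.mem_range.mpr hab)
      _ = m := habm.symm
  · -- degenerate case: all u j coincide for j < k
    push_neg at hS
    have hall : ∀ p q, p < k → q < k → u p = u q := by
      intro p q hp hq
      rcases lt_trichotomy p q with h | h | h
      · exact hS p q hp hq h
      · rw [h]
      · exact (hS q p hq hp h).symm
    have hSempty : S = ∅ := by
      ext r
      simp only [Set.mem_empty_iff_false, iff_false]
      rintro ⟨x, hx, y, hy, hxy, rfl⟩
      obtain ⟨px, hpx, rfl⟩ := Finset.mem_image.mp hx
      obtain ⟨py, hpy, rfl⟩ := Finset.mem_image.mp hy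
      rw [Finset.mem_range] at hpx hpy
      exact hxy (hall px py hpx hpy)
    have hfdiv : fdiv U = 0 := by
      unfold fdiv
      rw [show {r : ℝ | ∃ a ∈ U, ∃ b ∈ U, a ≠ b ∧ r = dist a b} = S from rfl, hSempty,
        Real.sInf_empty]
    have h1 := hgreedy 1 (by norm_num) (by omega) v
    simp only [Finset.range_one, Finset.inf'_singleton] at h1
    have : u 0 = u 1 := hall 0 1 (by omega) (by omega)
    rw [this] at h1
    simp only [dist_self] at h1
    refine ⟨u 0, hmemU 0 (by omega), ?_⟩
    rw [hfdiv, dist_comm, this]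
    exact h1
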